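/- The series ∑_{n=0}^∞ 1/((2n+1)³·C(2n,n)) equals the integral 2·∫₀¹ [Li₂(x/(1+x²)) − Li₂(−x/(1+x²))]/(1+x²) dx. -/

import Mathlib

open MeasureTheory Set intervalIntegral

/-- Polylogarithm of a real argument, defined by its convergent series. -/
noncomputable def rLi (s : ℕ) (x : ℝ) : ℝ := ∑' n : ℕ, x ^ (n + 1) / ((n : ℝ) + 1) ^ s

private lemma beta_nat : ∀ (l k : ℕ), (∫ u in (0:ℝ)..1, u ^ k * (1 - u) ^ l)
    = (k.factorial : ℝ) * l.factorial / (k + l + 1).factorial := by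
  intro l
  induction l with
  | zero =>
    intro k
    have h : (k.factorial:ℝ) ≠ 0 := by exact_mod_cast (Nat.factorial_pos k).ne'
    simp [integral_pow, Nat.factorial_succ]
    field_simp
  | succ l ih =>
    intro k
    have hder : ∀ u ∈ uIcc (0:ℝ) 1, HasDerivAt (fun u : ℝ => u ^ (k+1) * (1-u) ^ (l+1))
        (((k:ℝ)+1) * (u ^ k * (1-u)^(l+1)) - ((l:ℝ)+1) * (u^(k+1) * (1-u)^l)) u := by
      intro u _
      have h1 : HasDerivAt (fun u : ℝ => u ^ (k+1)) (((k:ℝ)+1) * u ^ k) u := by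
        simpa using hasDerivAt_pow (k+1) u
      have h3 : HasDerivAt (fun u : ℝ => 1 - u) (-1) u := by
        simpa using (hasDerivAt_id u).const_sub 1
      have h2 : HasDerivAt (fun u : ℝ => (1-u) ^ (l+1)) ((((l:ℝ)+1) * (1-u) ^ l) * (-1)) u := by
        have : HasDerivAt (fun x : ℝ => (1-x)^(l+1)) (((l+1 : ℕ):ℝ) * (1-u)^(l+1-1) * -1) u :=
          (hasDerivAt_pow (l+1) (1-u)).comp u h3
        convert this using 1
        rw [Nat.add_sub_cancel]
        push_cast
        ring
      have : HasDerivAt (fun u : ℝ => u ^ (k+1) * (1-u) ^ (l+1))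
          (((k:ℝ)+1) * u ^ k * (1-u)^(l+1) + u^(k+1) * ((((l:ℝ)+1) * (1-u) ^ l) * (-1))) u := h1.mul h2
      convert this using 1
      ring
    have hcont : Continuous (fun u : ℝ =>
        ((k:ℝ)+1) * (u ^ k * (1-u)^(l+1)) - ((l:ℝ)+1) * (u^(k+1) * (1-u)^l)) := by fun_prop
    have hI := intervalIntegral.integral_eq_sub_of_hasDerivAt hder (hcont.intervalIntegrable 0 1)
    have hzero : (∫ u in (0:ℝ)..1,
        (((k:ℝ)+1) * (u ^ k * (1-u)^(l+1)) - ((l:ℝ)+1) * (u^(k+1) * (1-u)^l))) = 0 := by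
      rw [hI]; simp
    have hint1 : IntervalIntegrable (fun u : ℝ => ((k:ℝ)+1) * (u ^ k * (1-u)^(l+1))) volume 0 1 :=
      (by fun_prop : Continuous fun u : ℝ => ((k:ℝ)+1) * (u ^ k * (1-u)^(l+1))).intervalIntegrable 0 1
    have hint2 : IntervalIntegrable (fun u : ℝ => ((l:ℝ)+1) * (u^(k+1) * (1-u)^l)) volume 0 1 :=
      (by fun_prop : Continuous fun u : ℝ => ((l:ℝ)+1) * (u^(k+1) * (1-u)^l)).intervalIntegrable 0 1
    rw [intervalIntegral.integral_sub hint1 hint2, sub_eq_zero,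
      intervalIntegral.integral_const_mul, intervalIntegral.integral_const_mul, ih (k+1)] at hzero
    have hidx : k + 1 + l + 1 = k + (l + 1) + 1 := by omega
    rw [hidx] at hzero
    have hne : ((k + (l+1) + 1).factorial : ℝ) ≠ 0 := by
      exact_mod_cast (Nat.factorial_pos _).ne'
    have hk1 : ((k:ℝ)+1) ≠ 0 := by positivity
    have hX : (∫ u in (0:ℝ)..1, u ^ k * (1-u)^(l+1))
        = ((l:ℝ)+1) * (((k+1).factorial : ℝ) * (l.factorial : ℝ)
          / ((k+(l+1)+1).factorial : ℝ)) / ((k:ℝ)+1) := by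
      rw [eq_div_iff hk1, mul_comm]
      linarith [hzero]
    rw [hX, Nat.factorial_succ k, Nat.factorial_succ l]
    push_cast
    field_simp

private lemma half_beta (m : ℕ) : (∫ u in (0:ℝ)..(1/2:ℝ), (u*(1-u))^m)
    = (m.factorial : ℝ) * m.factorial / (m + m + 1).factorial / 2 := by
  have hcont : Continuous fun u : ℝ => (u*(1-u))^m := by fun_prop
  have hsym : (∫ u in (0:ℝ)..(1/2:ℝ), (u*(1-u))^m) = ∫ u in (1/2:ℝ)..1, (u*(1-u))^m := by
    have h := intervalIntegral.integral_comp_sub_left (a := 0) (b := 1/2)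
      (fun u : ℝ => (u*(1-u))^m) 1
    norm_num at h
    rw [← h]
    apply intervalIntegral.integral_congr
    intro x _
    ring_nf
  have hadd : (∫ u in (0:ℝ)..(1/2:ℝ), (u*(1-u))^m) + (∫ u in (1/2:ℝ)..1, (u*(1-u))^m)
      = ∫ u in (0:ℝ)..1, (u*(1-u))^m :=
    integral_add_adjacent_intervals (hcont.intervalIntegrable _ _) (hcont.intervalIntegrable _ _)
  have hfull : (∫ u in (0:ℝ)..1, (u*(1-u))^m)
      = (m.factorial : ℝ) * m.factorial / (m + m + 1).factorial := by
    rw [← beta_nat m m]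
    apply intervalIntegral.integral_congr
    intro x _
    simp [mul_pow]
  rw [← hsym] at hadd
  linarith [hadd, hfull]

private noncomputable def G (m : ℕ) : C(ℝ, ℝ) :=
  ⟨fun x => 2 / (2*(m:ℝ)+1)^2 * (x ^ (2*m+1) / (1 + x^2) ^ (2*m+2)),
   continuous_const.mul ((continuous_pow _).div (by fun_prop) (fun x => by positivity))⟩

private lemma summable_aux {t : ℝ} (ht : |t| ≤ 1/2) :
    Summable (fun n : ℕ => t ^ (n+1) / ((n:ℝ)+1)^2) := by
  apply Summable.of_norm
  apply Summable.of_nonneg_of_le (fun n => norm_nonneg _) (fun n => ?_)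
    (summable_geometric_of_lt_one (r := 1/2) (by norm_num) (by norm_num))
  have h1 : ‖t ^ (n+1) / ((n:ℝ)+1)^2‖ = |t|^(n+1) / ((n:ℝ)+1)^2 := by
    rw [Real.norm_eq_abs, abs_div, abs_pow, abs_pow,
      abs_of_nonneg (show (0:ℝ) ≤ (n:ℝ)+1 by positivity)]
  rw [h1]
  have hn1 : (1:ℝ) ≤ ((n:ℝ)+1)^2 := by nlinarith [Nat.cast_nonneg (α := ℝ) n]
  calc |t|^(n+1) / ((n:ℝ)+1)^2 ≤ |t|^(n+1) := div_le_self (by positivity) hn1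
    _ ≤ (1/2:ℝ)^(n+1) := pow_le_pow_left₀ (abs_nonneg t) ht _
    _ ≤ (1/2:ℝ)^n := pow_le_pow_of_le_one (by norm_num) (by norm_num) (Nat.le_succ n)

private lemma rLi_sub {t : ℝ} (ht : |t| ≤ 1/2) :
    rLi 2 t - rLi 2 (-t) = ∑' m : ℕ, 2 * t ^ (2*m+1) / (2*(m:ℝ)+1)^2 := by
  have h1 := summable_aux ht
  have h2 := summable_aux (t := -t) (by rwa [abs_neg])
  rw [rLi, rLi, ← h1.tsum_sub h2]
  have hinj : Function.Injective (fun m : ℕ => 2 * m) := fun a b h =>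
    Nat.eq_of_mul_eq_mul_left (by norm_num) h
  rw [← Function.Injective.tsum_eq hinj (f := fun n : ℕ =>
      t ^ (n+1) / ((n:ℝ)+1)^2 - (-t) ^ (n+1) / ((n:ℝ)+1)^2) ?_]
  · apply tsum_congr
    intro m
    have hodd : (-t) ^ (2*m+1) = -(t ^ (2*m+1)) := Odd.neg_pow ⟨m, by ring⟩ t
    simp only [hodd]
    push_cast
    ring
  · intro n hn
    simp only [Function.mem_support] at hn
    rcases Nat.even_or_odd n with he | ho
    · rcases he with ⟨r, hr⟩
      exact ⟨r, show 2*r = n by omega⟩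
    · exfalso
      apply hn
      have : (-t)^(n+1) = t^(n+1) := Even.neg_pow (by rcases ho with ⟨c, hc⟩; exact ⟨c+1, by omega⟩) t
      rw [this]
      ring

private lemma pointwise {x : ℝ} (hx : x ∈ Icc (0:ℝ) 1) :
    (rLi 2 (x/(1+x^2)) - rLi 2 (-(x/(1+x^2)))) / (1+x^2) = ∑' m : ℕ, G m x := by
  obtain ⟨h0, h1⟩ := hx
  have hd : (0:ℝ) < 1 + x^2 := by positivity
  have ht : |x/(1+x^2)| ≤ 1/2 := by
    rw [abs_of_nonneg (by positivity), div_le_iff₀ hd]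
    nlinarith [sq_nonneg (1 - x)]
  rw [rLi_sub ht, ← tsum_div_const]
  apply tsum_congr
  intro m
  show 2 * (x/(1+x^2))^(2*m+1) / (2*(m:ℝ)+1)^2 / (1+x^2)
      = 2 / (2*(m:ℝ)+1)^2 * (x ^ (2*m+1) / (1 + x^2) ^ (2*m+2))
  rw [div_pow, pow_succ (1+x^2) (2*m+1)]
  simp only [div_eq_mul_inv, mul_inv]
  ring

private lemma G_bound (m : ℕ) {x : ℝ} (hx : x ∈ Icc (0:ℝ) 1) :
    ‖G m x‖ ≤ 2 * (1/2:ℝ)^(2*m+1) := by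
  obtain ⟨h0, h1⟩ := hx
  have hd : (0:ℝ) < 1 + x^2 := by positivity
  have key : x ^ (2*m+1) / (1+x^2)^(2*m+2) ≤ (1/2:ℝ)^(2*m+1) := by
    have e : x ^ (2*m+1) / (1+x^2)^(2*m+2) = (x/(1+x^2))^(2*m+1) * (1+x^2)⁻¹ := by
      rw [div_pow, pow_succ (1+x^2) (2*m+1)]
      field_simp
    rw [e]
    have h2 : x/(1+x^2) ≤ 1/2 := by
      rw [div_le_iff₀ hd]; nlinarith [sq_nonneg (1-x)]
    have h3 : (1+x^2)⁻¹ ≤ 1 := by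
      rw [inv_le_one_iff₀]; right; nlinarith
    calc (x/(1+x^2))^(2*m+1) * (1+x^2)⁻¹ ≤ (1/2:ℝ)^(2*m+1) * 1 :=
          mul_le_mul (pow_le_pow_left₀ (by positivity) h2 _) h3 (by positivity) (by positivity)
      _ = (1/2:ℝ)^(2*m+1) := mul_one _
  have hval : G m x = 2 / (2*(m:ℝ)+1)^2 * (x ^ (2*m+1) / (1 + x^2) ^ (2*m+2)) := rfl
  rw [hval, Real.norm_eq_abs, abs_of_nonneg (by positivity)]
  have hc : 2 / (2*(m:ℝ)+1)^2 ≤ 2 :=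
    div_le_self (by norm_num) (by nlinarith [Nat.cast_nonneg (α := ℝ) m])
  calc 2 / (2*(m:ℝ)+1)^2 * (x ^ (2*m+1) / (1 + x^2) ^ (2*m+2))
      ≤ 2 * (1/2:ℝ)^(2*m+1) := mul_le_mul hc key (by positivity) (by norm_num)

private lemma G_summable : Summable (fun m : ℕ =>
    ‖(G m).restrict (⟨uIcc (0:ℝ) 1, isCompact_uIcc⟩ : TopologicalSpace.Compacts ℝ)‖) := by
  have hb : Summable (fun m : ℕ => 2 * (1/2:ℝ)^(2*m+1)) := by
    have he : (fun m : ℕ => 2 * (1/2:ℝ)^(2*m+1)) = fun m : ℕ => (1/4:ℝ)^m := by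
      funext m
      rw [pow_succ, pow_mul]
      norm_num
      ring
    rw [he]
    exact summable_geometric_of_lt_one (by norm_num) (by norm_num)
  apply Summable.of_nonneg_of_le (fun m => norm_nonneg _) (fun m => ?_) hb
  apply (ContinuousMap.norm_le _ (by positivity)).mpr
  rintro ⟨x, hx⟩
  have hx' : x ∈ Icc (0:ℝ) 1 := by
    have h : x ∈ uIcc (0:ℝ) 1 := hx
    rwa [uIcc_of_le (by norm_num : (0:ℝ) ≤ 1)] at h
  exact G_bound m hx'

private lemma G_integral (m : ℕ) :
    2 * ∫ x in (0:ℝ)..1, G m x = 1 / ((2 * (m:ℝ) + 1)^3 * (Nat.centralBinom m : ℝ)) := by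
  have hd : ∀ x : ℝ, (0:ℝ) < 1 + x^2 := fun x => by positivity
  have hsub : (∫ x in (0:ℝ)..1, x^(2*m+1)/(1+x^2)^(2*m+2))
      = (1/2:ℝ) * ∫ u in (0:ℝ)..(1/2:ℝ), (u*(1-u))^m := by
    have hder : ∀ x ∈ uIcc (0:ℝ) 1, HasDerivAt (fun x : ℝ => x^2/(1+x^2))
        (2*x/(1+x^2)^2) x := by
      intro x _
      have h1 : HasDerivAt (fun x : ℝ => x^2) (2*x) x := by simpa using hasDerivAt_pow 2 x
      have h2 : HasDerivAt (fun x : ℝ => 1+x^2) (2*x) x := by simpa using h1.const_add 1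
      have : HasDerivAt (fun x : ℝ => x^2/(1+x^2)) ((2*x*(1+x^2) - x^2*(2*x))/(1+x^2)^2) x :=
        h1.div h2 (hd x).ne'
      convert this using 1
      field_simp
      ring
    have hf' : ContinuousOn (fun x : ℝ => 2*x/(1+x^2)^2) (uIcc (0:ℝ) 1) :=
      (Continuous.div (by fun_prop) (by fun_prop) (fun x => by positivity)).continuousOn
    have hg : Continuous (fun u : ℝ => (1/2:ℝ) * (u*(1-u))^m) := by fun_prop
    have h := intervalIntegral.integral_comp_smul_deriv hder hf' hg
    simp only [smul_eq_mul] at h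
    norm_num at h
    rw [← h]
    apply intervalIntegral.integral_congr
    intro x _
    have hne : (1+x^2) ≠ 0 := (hd x).ne'
    have hone : 1 - x^2/(1+x^2) = 1/(1+x^2) := by field_simp; ring
    show x^(2*m+1)/(1+x^2)^(2*m+2) = 2*x/(1+x^2)^2 * ((1/2:ℝ) * (x^2/(1+x^2)*(1-x^2/(1+x^2)))^m)
    rw [hone, div_mul_div_comm, mul_one, ← pow_two (1+x^2), div_pow, ← pow_mul, ← pow_mul]
    have h2 : ((1:ℝ)+x^2) ≠ 0 := hne
    field_simp
    ring
  have hGi : (∫ x in (0:ℝ)..1, G m x)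
      = 2 / (2*(m:ℝ)+1)^2 * ∫ x in (0:ℝ)..1, x^(2*m+1)/(1+x^2)^(2*m+2) := by
    rw [← intervalIntegral.integral_const_mul]
    rfl
  rw [hGi, hsub, half_beta]
  have hC : (Nat.centralBinom m : ℝ) * m.factorial * m.factorial = ((2*m).factorial : ℝ) := by
    have h := Nat.choose_mul_factorial_mul_factorial (show m ≤ 2*m by omega)
    rw [show 2*m - m = m by omega] at h
    rw [Nat.centralBinom]
    exact_mod_cast h
  have hfac : ((m + m + 1).factorial : ℝ) = (2*(m:ℝ)+1) * ((2*m).factorial : ℝ) := by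
    have : m + m + 1 = (2*m) + 1 := by omega
    rw [this, Nat.factorial_succ]
    push_cast
    ring
  have hCpos : (0:ℝ) < (Nat.centralBinom m : ℝ) := by
    exact_mod_cast Nat.centralBinom_pos m
  have hfpos : (0:ℝ) < ((2*m).factorial : ℝ) := by exact_mod_cast Nat.factorial_pos _
  have hm1 : (0:ℝ) < 2*(m:ℝ)+1 := by positivity
  have hmf : (0:ℝ) < (m.factorial : ℝ) := by exact_mod_cast Nat.factorial_pos m
  rw [hfac, ← hC]
  have hCne : (Nat.centralBinom m : ℝ) ≠ 0 := hCpos.ne'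
  have hmfne : (m.factorial : ℝ) ≠ 0 := hmf.ne'
  field_simp

theorem chen_series_one_integral_rep :
    (∑' n : ℕ, 1 / ((2 * (n : ℝ) + 1) ^ 3 * (Nat.centralBinom n : ℝ))) =
      2 * ∫ x in (0 : ℝ)..1,
        (rLi 2 (x / (1 + x ^ 2)) - rLi 2 (-(x / (1 + x ^ 2)))) / (1 + x ^ 2) := by
  have key : EqOn (fun x : ℝ => (rLi 2 (x / (1 + x ^ 2)) - rLi 2 (-(x / (1 + x ^ 2)))) / (1 + x ^ 2))
      (fun x : ℝ => ∑' m : ℕ, G m x) (uIcc (0:ℝ) 1) := by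
    intro x hx
    exact pointwise (by rwa [uIcc_of_le (by norm_num : (0:ℝ) ≤ 1)] at hx)
  rw [intervalIntegral.integral_congr key,
    ← tsum_intervalIntegral_eq_of_summable_norm G_summable, ← tsum_mul_left]
  exact tsum_congr fun m => (G_integral m).symm
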